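/- Let b_f† for a face f denote the sum of signed bosonic creation operators around the 4-cycle f. For a closed column of 4L₁ faces labelled a_i, b_i, c_i, d_i (i = 1,…,L₁, indices mod L₁, L₁ even ≥ 2), define |↑⟩ = ∏_{i odd} a_i† c_i† ∏_{i even} b_i† d_i† |0⟩ and |↓⟩ = ∏_{i odd} b_i† d_i† ∏_{i even} a_i† c_i† |0⟩. Then ⟨↑|↑⟩ = ⟨↓|↓⟩ = 4^{2L₁} and |⟨↑|↓⟩| < 4^{2L₁}; consequently the Gram matrix of {|↑⟩, |↓⟩} has positive determinant and the two states are linearly independent. -/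

import Mathlib

open MvPolynomial

/-!
Bosonic Fock space over the edge set `E`, modelled as `MvPolynomial E ℂ`:
the monomial `X^α` represents the state `∏ (b_e†)^(α e) |0⟩`, and the Fock space
inner product is `⟨X^α, X^β⟩ = α! δ_{αβ}` (so that `b_e† = X_e ·` and `b_e = ∂_e`
satisfy the canonical commutation relations).
-/

/-- The bosonic Fock space inner product on `MvPolynomial E ℂ`
(antilinear in the first argument). -/
noncomputable def wInner {E : Type*} [DecidableEq E] (p q : MvPolynomial E ℂ) : ℂ :=
  ∑ α ∈ p.support ∪ q.support,
    (∏ e ∈ α.support, (Nat.factorial (α e) : ℂ)) *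
      (starRingEnd ℂ) (MvPolynomial.coeff α p) * MvPolynomial.coeff α q

/-- The faces of a closed column of length `L`: at each height `i : ZMod L` there are
four faces `(i,0) = aᵢ`, `(i,1) = bᵢ`, `(i,2) = cᵢ`, `(i,3) = dᵢ` arranged in a ring. -/
abbrev ColFace (L : ℕ) := ZMod L × ZMod 4

/-- Adjacency of column faces (faces sharing exactly one edge): around the ring
`aᵢ - bᵢ - cᵢ - dᵢ - aᵢ` at the same height, and between consecutive heights for the
same letter. -/
def colAdj {L : ℕ} (f g : ColFace L) : Prop :=
  (f.1 = g.1 ∧ (g.2 = f.2 + 1 ∨ f.2 = g.2 + 1)) ∨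
  (f.2 = g.2 ∧ (g.1 = f.1 + 1 ∨ f.1 = g.1 + 1))

instance {L : ℕ} (f g : ColFace L) : Decidable (colAdj f g) := by
  unfold colAdj; infer_instance

/-- The faces occupied in the state `|↑⟩`: `aᵢ, cᵢ` for odd `i` and `bᵢ, dᵢ`
for even `i`. (`|↓⟩` occupies the complementary pattern.) -/
def upFace {L : ℕ} (f : ColFace L) : Prop :=
  (Odd f.1.val ∧ (f.2 = 0 ∨ f.2 = 2)) ∨ (Even f.1.val ∧ (f.2 = 1 ∨ f.2 = 3))

instance {L : ℕ} (f : ColFace L) : Decidable (upFace f) := by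
  unfold upFace; infer_instance

/-- The face creation operator applied to the vacuum:
`b_f† |0⟩ = ∑ e σ_f(e) b_e† |0⟩` for the signed (±1) indicator `σ f` of the four
edges of the face `f`. -/
noncomputable def facePoly {E : Type*} [Fintype E] {L : ℕ}
    (σ : ColFace L → E → ℤ) (f : ColFace L) : MvPolynomial E ℂ :=
  ∑ e : E, (σ f e : ℂ) • X e

/-- The state `|↑⟩ = ∏_{i odd} aᵢ† cᵢ† ∏_{i even} bᵢ† dᵢ† |0⟩`. -/
noncomputable def upState {E : Type*} [Fintype E] {L : ℕ} [NeZero L]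
    (σ : ColFace L → E → ℤ) : MvPolynomial E ℂ :=
  ∏ f ∈ Finset.univ.filter (fun f : ColFace L => upFace f), facePoly σ f

/-- The state `|↓⟩ = ∏_{i odd} bᵢ† dᵢ† ∏_{i even} aᵢ† cᵢ† |0⟩`. -/
noncomputable def downState {E : Type*} [Fintype E] {L : ℕ} [NeZero L]
    (σ : ColFace L → E → ℤ) : MvPolynomial E ℂ :=
  ∏ f ∈ Finset.univ.filter (fun f : ColFace L => ¬ upFace f), facePoly σ f

/-! ### Auxiliary development -/

namespace ColAux
set_option linter.unusedSectionVars false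

variable {E : Type*} [DecidableEq E]

noncomputable def wfact (α : E →₀ ℕ) : ℂ := ∏ e ∈ α.support, (Nat.factorial (α e) : ℂ)

lemma conj_wfact (α : E →₀ ℕ) : (starRingEnd ℂ) (wfact α) = wfact α := by
  unfold wfact
  rw [map_prod]
  exact Finset.prod_congr rfl fun e _ => by simp

lemma wInner_eq_sum (p q : MvPolynomial E ℂ) (s : Finset (E →₀ ℕ))
    (h : p.support ∩ q.support ⊆ s) :
    wInner p q = ∑ α ∈ s, wfact α * (starRingEnd ℂ) (p.coeff α) * q.coeff α := by
  have key : ∀ (u : Finset (E →₀ ℕ)), p.support ∩ q.support ⊆ u →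
      ∑ α ∈ u, wfact α * (starRingEnd ℂ) (p.coeff α) * q.coeff α
      = ∑ α ∈ u ∪ (p.support ∪ q.support) ∪ s,
          wfact α * (starRingEnd ℂ) (p.coeff α) * q.coeff α := by
    intro u hu
    apply Finset.sum_subset (by intro x hx; simp [hx])
    intro x _ hxu
    have : p.coeff x = 0 ∨ q.coeff x = 0 := by
      by_contra hc
      push_neg at hc
      exact hxu (hu (Finset.mem_inter.2 ⟨mem_support_iff.2 hc.1, mem_support_iff.2 hc.2⟩))
    rcases this with h0 | h0 <;> simp [h0]
  have hdef : wInner p q = ∑ α ∈ p.support ∪ q.support,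
      wfact α * (starRingEnd ℂ) (p.coeff α) * q.coeff α := rfl
  have h1 := key (p.support ∪ q.support) Finset.inter_subset_union
  have h2 := key s h
  rw [hdef, h1, h2]
  congr 1
  ext x
  simp only [Finset.mem_union]
  tauto

lemma wInner_zero_right (p : MvPolynomial E ℂ) : wInner p 0 = 0 := by
  rw [wInner_eq_sum p 0 ∅ (by simp)]; simp

lemma wInner_zero_left (q : MvPolynomial E ℂ) : wInner 0 q = 0 := by
  rw [wInner_eq_sum 0 q ∅ (by simp)]; simp

lemma wInner_add_right (p q r : MvPolynomial E ℂ) :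
    wInner p (q + r) = wInner p q + wInner p r := by
  set s := p.support ∪ (q.support ∪ r.support ∪ (q + r).support) with hs
  rw [wInner_eq_sum p (q+r) s (by intro x hx; simp only [s, Finset.mem_union, Finset.mem_inter] at hx ⊢; tauto),
      wInner_eq_sum p q s (by intro x hx; simp only [s, Finset.mem_union, Finset.mem_inter] at hx ⊢; tauto),
      wInner_eq_sum p r s (by intro x hx; simp only [s, Finset.mem_union, Finset.mem_inter] at hx ⊢; tauto),
      ← Finset.sum_add_distrib]
  exact Finset.sum_congr rfl fun α _ => by simp [coeff_add]; ring

lemma wInner_smul_right (c : ℂ) (p q : MvPolynomial E ℂ) :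
    wInner p (c • q) = c * wInner p q := by
  set s := p.support ∪ (q.support ∪ (c • q).support) with hs
  rw [wInner_eq_sum p (c • q) s (by intro x hx; simp only [s, Finset.mem_union, Finset.mem_inter] at hx ⊢; tauto),
      wInner_eq_sum p q s (by intro x hx; simp only [s, Finset.mem_union, Finset.mem_inter] at hx ⊢; tauto),
      Finset.mul_sum]
  exact Finset.sum_congr rfl fun α _ => by simp [coeff_smul]; ring

lemma wInner_add_left (p q r : MvPolynomial E ℂ) :
    wInner (p + q) r = wInner p r + wInner q r := by
  set s := (p + q).support ∪ (p.support ∪ q.support ∪ r.support) with hs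
  rw [wInner_eq_sum (p+q) r s (by intro x hx; simp only [s, Finset.mem_union, Finset.mem_inter] at hx ⊢; tauto),
      wInner_eq_sum p r s (by intro x hx; simp only [s, Finset.mem_union, Finset.mem_inter] at hx ⊢; tauto),
      wInner_eq_sum q r s (by intro x hx; simp only [s, Finset.mem_union, Finset.mem_inter] at hx ⊢; tauto),
      ← Finset.sum_add_distrib]
  exact Finset.sum_congr rfl fun α _ => by simp [coeff_add]; ring

lemma wInner_smul_left (c : ℂ) (p q : MvPolynomial E ℂ) :
    wInner (c • p) q = (starRingEnd ℂ) c * wInner p q := by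
  set s := (c • p).support ∪ (p.support ∪ q.support) with hs
  rw [wInner_eq_sum (c • p) q s (by intro x hx; simp only [s, Finset.mem_union, Finset.mem_inter] at hx ⊢; tauto),
      wInner_eq_sum p q s (by intro x hx; simp only [s, Finset.mem_union, Finset.mem_inter] at hx ⊢; tauto),
      Finset.mul_sum]
  exact Finset.sum_congr rfl fun α _ => by simp [coeff_smul]; ring

lemma wInner_sum_right {ι : Type*} (p : MvPolynomial E ℂ) (t : Finset ι)
    (q : ι → MvPolynomial E ℂ) :
    wInner p (∑ j ∈ t, q j) = ∑ j ∈ t, wInner p (q j) := by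
  induction t using Finset.cons_induction with
  | empty => simp [wInner_zero_right]
  | cons a t ha ih => rw [Finset.sum_cons, wInner_add_right, ih, Finset.sum_cons]

lemma wInner_sum_left {ι : Type*} (q : MvPolynomial E ℂ) (t : Finset ι)
    (p : ι → MvPolynomial E ℂ) :
    wInner (∑ j ∈ t, p j) q = ∑ j ∈ t, wInner (p j) q := by
  induction t using Finset.cons_induction with
  | empty => simp [wInner_zero_left]
  | cons a t ha ih => rw [Finset.sum_cons, wInner_add_left, ih, Finset.sum_cons]

lemma wInner_conj (p q : MvPolynomial E ℂ) :
    wInner q p = (starRingEnd ℂ) (wInner p q) := by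
  rw [wInner_eq_sum q p (p.support ∪ q.support)
        (by intro x hx; simp only [Finset.mem_union, Finset.mem_inter] at hx ⊢; tauto),
      wInner_eq_sum p q (p.support ∪ q.support)
        (by intro x hx; simp only [Finset.mem_union, Finset.mem_inter] at hx ⊢; tauto),
      map_sum]
  refine Finset.sum_congr rfl fun α _ => ?_
  rw [map_mul, map_mul, conj_wfact, RingHomCompTriple.comp_apply, RingHom.id_apply]
  ring

lemma wfact_add_single (α : E →₀ ℕ) (e : E) :
    wfact (α + Finsupp.single e 1) = ((α e : ℂ) + 1) * wfact α := by
  set β := α + Finsupp.single e 1 with hβ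
  have hβe : β e = α e + 1 := by simp [hβ]
  have hβx : ∀ x ≠ e, β x = α x := by
    intro x hx; simp [hβ, Finsupp.single_eq_of_ne' (Ne.symm hx)]
  have hsupp : β.support = insert e α.support := by
    ext x
    rcases eq_or_ne x e with rfl | hx
    · simp [Finsupp.mem_support_iff, hβe]
    · simp [Finsupp.mem_support_iff, hβx x hx, hx]
  have hins : insert e α.support = insert e (α.support.erase e) := by
    ext x; by_cases hx : x = e <;> simp [hx]
  have hprod : wfact β = (β e).factorial * ∏ x ∈ α.support.erase e, ((α x).factorial : ℂ) := by
    rw [wfact, hsupp, hins, Finset.prod_insert (Finset.notMem_erase e _)]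
    congr 1
    exact Finset.prod_congr rfl fun x hx => by rw [hβx x (Finset.ne_of_mem_erase hx)]
  have hα : wfact α = (α e).factorial * ∏ x ∈ α.support.erase e, ((α x).factorial : ℂ) := by
    by_cases he : e ∈ α.support
    · rw [wfact, ← Finset.mul_prod_erase _ _ he]
    · have h0 : α e = 0 := by simpa [Finsupp.mem_support_iff] using he
      rw [wfact, Finset.erase_eq_of_notMem he, h0]
      simp
  rw [hprod, hα, hβe]
  push_cast [Nat.factorial_succ]
  ring

lemma wInner_monomial (α β : E →₀ ℕ) (c d : ℂ) :
    wInner (monomial α c) (monomial β d) =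
      if α = β then wfact α * (starRingEnd ℂ) c * d else 0 := by
  rw [wInner_eq_sum _ _ {β} ?hs]
  · rw [Finset.sum_singleton, coeff_monomial, coeff_monomial, if_pos rfl]
    by_cases h : α = β
    · subst h; simp
    · simp [h]
  · intro x hx
    simp only [Finset.mem_inter, mem_support_iff] at hx
    have := hx.2
    rw [coeff_monomial] at this
    by_cases h : β = x
    · simp [h]
    · simp [h] at this

lemma wInner_X_mul (e : E) (p q : MvPolynomial E ℂ) :
    wInner (X e * p) q = wInner p (pderiv e q) := by
  induction q using MvPolynomial.induction_on' generalizing p with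
  | add q1 q2 ih1 ih2 => rw [map_add, wInner_add_right, wInner_add_right, ih1, ih2]
  | monomial β d =>
    induction p using MvPolynomial.induction_on' with
    | add p1 p2 ih1 ih2 => rw [mul_add, wInner_add_left, wInner_add_left, ih1, ih2]
    | monomial α c =>
      have hXm : X e * monomial α c = monomial (α + Finsupp.single e 1) c := by
        rw [X, monomial_mul, one_mul, add_comm]
      rw [hXm, pderiv_monomial, wInner_monomial, wInner_monomial]
      by_cases hβe : β e = 0
      · have h1 : α + Finsupp.single e 1 ≠ β := by
          intro h
          have : β e = α e + 1 := by rw [← h]; simp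
          omega
        rw [if_neg h1, hβe]
        simp
      · have hle : Finsupp.single e 1 ≤ β :=
          Finsupp.single_le_iff.2 (Nat.one_le_iff_ne_zero.2 hβe)
        have hiff : α + Finsupp.single e 1 = β ↔ α = β - Finsupp.single e 1 := by
          constructor
          · rintro rfl; rw [add_tsub_cancel_right]
          · rintro rfl; exact tsub_add_cancel_of_le hle
        by_cases h : α + Finsupp.single e 1 = β
        · rw [if_pos h, if_pos (hiff.1 h)]
          have hβα : β e = α e + 1 := by rw [← h]; simp
          rw [wfact_add_single, hβα]
          push_cast
          ring
        · rw [if_neg h, if_neg (fun hh => h (hiff.2 hh))]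

lemma wInner_one_left (q : MvPolynomial E ℂ) : wInner 1 q = constantCoeff q := by
  rw [wInner_eq_sum 1 q (insert 0 q.support) ?hs]
  · rw [Finset.sum_eq_single (0 : E →₀ ℕ)]
    · simp [wfact, coeff_zero_one]
      rfl
    · intro b _ hb
      rw [MvPolynomial.coeff_one, if_neg (by exact fun h => hb h.symm)]
      simp
    · simp
  · intro x hx
    simp only [Finset.mem_inter, mem_support_iff] at hx
    have := hx.1
    rw [MvPolynomial.coeff_one] at this
    rcases eq_or_ne x 0 with rfl | h
    · simp
    · simp [Ne.symm h] at this

section Col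
variable [Fintype E] {L : ℕ} (σ : ColFace L → E → ℤ)

/-- The contraction `[b_f, b_g†] = ∑_e σ_f(e) σ_g(e)`. -/
noncomputable def contr (f g : ColFace L) : ℂ := ∑ e : E, (σ f e : ℂ) * (σ g e : ℂ)

/-- The face annihilation operator. -/
noncomputable def Dop (f : ColFace L) (q : MvPolynomial E ℂ) : MvPolynomial E ℂ :=
  ∑ e : E, (σ f e : ℂ) • pderiv e q

lemma Dop_mul (f : ColFace L) (p q : MvPolynomial E ℂ) :
    Dop σ f (p * q) = Dop σ f p * q + p * Dop σ f q := by
  unfold Dop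
  rw [Finset.sum_mul, Finset.mul_sum, ← Finset.sum_add_distrib]
  refine Finset.sum_congr rfl fun e _ => ?_
  rw [pderiv_mul, smul_add, smul_mul_assoc, mul_smul_comm]

lemma Dop_one (f : ColFace L) : Dop σ f 1 = 0 := by
  unfold Dop; simp

lemma Dop_facePoly (f g : ColFace L) :
    Dop σ f (facePoly σ g) = C (contr σ f g) := by
  unfold Dop facePoly contr
  have h1 : ∀ e : E, pderiv e (∑ e' : E, (σ g e' : ℂ) • X e') = C ((σ g e : ℂ)) := by
    intro e
    rw [map_sum, Finset.sum_eq_single e]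
    · simp [MvPolynomial.smul_eq_C_mul, pderiv_X_self]
    · intro b _ hb
      simp [MvPolynomial.smul_eq_C_mul, pderiv_X, Pi.single_eq_of_ne hb]
    · simp
  simp_rw [h1, MvPolynomial.smul_eq_C_mul, ← map_mul, ← map_sum]

lemma Dop_prod {ι : Type*} [DecidableEq ι] (f : ColFace L) (t : Finset ι)
    (m : ι → MvPolynomial E ℂ) :
    Dop σ f (∏ j ∈ t, m j) = ∑ j ∈ t, Dop σ f (m j) * ∏ j' ∈ t.erase j, m j' := by
  induction t using Finset.induction with
  | empty => simp [Dop_one]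
  | @insert a t ha ih =>
    rw [Finset.prod_insert ha, Dop_mul, ih, Finset.sum_insert ha, Finset.erase_insert ha]
    congr 1
    rw [Finset.mul_sum]
    refine Finset.sum_congr rfl fun j hj => ?_
    have hja : j ≠ a := fun h => ha (h ▸ hj)
    rw [Finset.erase_insert_of_ne (Ne.symm hja),
        Finset.prod_insert (fun h => ha (Finset.mem_of_mem_erase h))]
    ring

lemma wick_rec (s t : Finset (ColFace L)) {a : ColFace L} (ha : a ∈ s) :
    wInner (∏ f ∈ s, facePoly σ f) (∏ g ∈ t, facePoly σ g) =
      ∑ j ∈ t, contr σ a j *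
        wInner (∏ f ∈ s.erase a, facePoly σ f) (∏ g ∈ t.erase j, facePoly σ g) := by
  rw [← Finset.mul_prod_erase s _ ha]
  have step1 : ∀ p q : MvPolynomial E ℂ,
      wInner (facePoly σ a * p) q = wInner p (Dop σ a q) := by
    intro p q
    rw [facePoly, Finset.sum_mul]
    have : ∀ e : E, ((σ a e : ℂ) • X e) * p = (σ a e : ℂ) • (X e * p) := fun e =>
      smul_mul_assoc _ _ _
    simp_rw [this]
    rw [wInner_sum_left]
    simp_rw [wInner_smul_left, wInner_X_mul]
    rw [Dop, wInner_sum_right]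
    refine Finset.sum_congr rfl fun e _ => ?_
    rw [wInner_smul_right]
    congr 1
    exact map_intCast (starRingEnd ℂ) (σ a e)
  rw [step1, Dop_prod, wInner_sum_right]
  refine Finset.sum_congr rfl fun j hj => ?_
  rw [Dop_facePoly, C_mul', wInner_smul_right]

lemma constantCoeff_facePoly (f : ColFace L) : constantCoeff (facePoly σ f) = 0 := by
  unfold facePoly
  rw [map_sum]
  simp

lemma wInner_one_prod (t : Finset (ColFace L)) :
    wInner (1 : MvPolynomial E ℂ) (∏ g ∈ t, facePoly σ g)
      = if t = ∅ then 1 else 0 := by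
  rw [wInner_one_left, map_prod]
  rcases t.eq_empty_or_nonempty with rfl | ⟨j, hj⟩
  · simp
  · rw [if_neg (Finset.nonempty_iff_ne_empty.1 ⟨j, hj⟩)]
    exact Finset.prod_eq_zero hj (constantCoeff_facePoly σ j)

lemma wick_diag (s : Finset (ColFace L))
    (h4 : ∀ f ∈ s, contr σ f f = 4)
    (h0 : ∀ f ∈ s, ∀ g ∈ s, f ≠ g → contr σ f g = 0) :
    wInner (∏ f ∈ s, facePoly σ f) (∏ f ∈ s, facePoly σ f) = 4 ^ s.card := by
  induction s using Finset.induction with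
  | empty => simpa using wInner_one_prod σ ∅
  | @insert a s ha ih =>
    rw [wick_rec σ _ _ (Finset.mem_insert_self a s), Finset.sum_insert ha,
        Finset.erase_insert ha]
    rw [h4 a (Finset.mem_insert_self a s)]
    rw [Finset.sum_eq_zero fun j hj => by
      rw [h0 a (Finset.mem_insert_self a s) j (Finset.mem_insert_of_mem hj)
        (fun h => ha (h ▸ hj)), zero_mul]]
    rw [add_zero, ih (fun f hf => h4 f (Finset.mem_insert_of_mem hf))
      (fun f hf g hg => h0 f (Finset.mem_insert_of_mem hf) g (Finset.mem_insert_of_mem hg)),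
      Finset.card_insert_of_notMem ha, pow_succ]
    ring

lemma wick_bound (s t : Finset (ColFace L))
    (hrow : ∀ f ∈ s, ∑ g ∈ t, ‖contr σ f g‖ ≤ 4) :
    ‖wInner (∏ f ∈ s, facePoly σ f) (∏ g ∈ t, facePoly σ g)‖
      ≤ 4 ^ s.card := by
  induction s using Finset.induction generalizing t with
  | empty =>
    rw [Finset.prod_empty, wInner_one_prod σ t]
    rcases eq_or_ne t ∅ with rfl | h
    · simp
    · simp [h]
  | @insert a s ha ih =>
    rw [wick_rec σ _ _ (Finset.mem_insert_self a s), Finset.erase_insert ha]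
    calc ‖∑ j ∈ t, contr σ a j *
          wInner (∏ f ∈ s, facePoly σ f) (∏ g ∈ t.erase j, facePoly σ g)‖
        ≤ ∑ j ∈ t, ‖contr σ a j *
          wInner (∏ f ∈ s, facePoly σ f) (∏ g ∈ t.erase j, facePoly σ g)‖ :=
          norm_sum_le _ _
      _ ≤ ∑ j ∈ t, ‖contr σ a j‖ * 4 ^ s.card := by
          refine Finset.sum_le_sum fun j hj => ?_
          rw [norm_mul]
          refine mul_le_mul_of_nonneg_left ?_ (norm_nonneg _)
          refine ih _ fun f hf => ?_
          refine le_trans ?_ (hrow f (Finset.mem_insert_of_mem hf))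
          exact Finset.sum_le_sum_of_subset_of_nonneg (Finset.erase_subset j t)
            (fun g _ _ => norm_nonneg _)
      _ ≤ 4 * 4 ^ s.card := by
          rw [← Finset.sum_mul]
          exact mul_le_mul_of_nonneg_right (hrow a (Finset.mem_insert_self a s))
            (by positivity)
      _ = 4 ^ (insert a s).card := by
          rw [Finset.card_insert_of_notMem ha, pow_succ]; ring

end Col
end ColAux

namespace ColAux
set_option linter.unusedSectionVars false
variable {L : ℕ} [NeZero L]

lemma up_iff (f : ColFace L) : upFace f ↔ (Odd f.1.val ↔ (f.2 = 0 ∨ f.2 = 2)) := by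
  have hc : ∀ c : ZMod 4, ¬(c = 0 ∨ c = 2) ↔ (c = 1 ∨ c = 3) := by decide
  unfold upFace
  rw [← Nat.not_odd_iff_even, ← hc f.2]
  tauto

lemma parity_flip (hL : Even L) (hL2 : 2 ≤ L) (i : ZMod L) :
    Odd ((i + 1).val) ↔ ¬ Odd i.val := by
  haveI : Fact (1 < L) := ⟨by omega⟩
  have h1 : (1 : ZMod L).val = 1 := ZMod.val_one L
  have h2 : (i + 1).val = (i.val + 1) % L := by rw [ZMod.val_add, h1]
  have h3 : ((i.val + 1) % L) % 2 = (i.val + 1) % 2 :=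
    Nat.mod_mod_of_dvd _ hL.two_dvd
  rw [h2, Nat.odd_iff, h3, ← Nat.odd_iff, Nat.odd_add_one]

lemma adj_flip (hL : Even L) (hL2 : 2 ≤ L) {f g : ColFace L} (h : colAdj f g) :
    (upFace f ↔ ¬ upFace g) := by
  rw [up_iff, up_iff]
  rcases h with ⟨h1, h2⟩ | ⟨h1, h2⟩
  · have hq : ∀ c d : ZMod 4, (d = c + 1 ∨ c = d + 1) →
        ((c = 0 ∨ c = 2) ↔ ¬(d = 0 ∨ d = 2)) := by decide
    have := hq f.2 g.2 h2
    rw [h1]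
    tauto
  · have hp : Odd (g.1.val) ↔ ¬ Odd (f.1.val) := by
      rcases h2 with h2 | h2
      · rw [h2]; exact parity_flip hL hL2 f.1
      · rw [h2, parity_flip hL hL2 g.1]; tauto
    rw [h1]
    tauto

lemma up_succ_letter (f : ColFace L) : upFace (f.1, f.2 + 1) ↔ ¬ upFace f := by
  rw [up_iff, up_iff]
  have hq : ∀ c : ZMod 4, ((c + 1 = 0 ∨ c + 1 = 2) ↔ ¬(c = 0 ∨ c = 2)) := by decide
  have := hq f.2
  tauto

lemma card_up : (Finset.univ.filter (fun f : ColFace L => upFace f)).card = 2 * L := by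
  classical
  have hbij : (Finset.univ.filter (fun f : ColFace L => upFace f)).card
      = (Finset.univ.filter (fun f : ColFace L => ¬ upFace f)).card := by
    have key : ∀ f : ColFace L, upFace (f.1, f.2) ↔ ¬ upFace (f.1, f.2 - 1) := by
      intro f
      have := up_succ_letter (L := L) (f.1, f.2 - 1)
      simp only [sub_add_cancel] at this
      tauto
    apply Finset.card_bij' (fun f _ => (f.1, f.2 + 1)) (fun f _ => (f.1, f.2 - 1))
    · intro f hf
      simp
    · intro f hf
      simp
    · intro f hf
      simp only [Finset.mem_filter, Finset.mem_univ, true_and] at hf ⊢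
      rw [up_succ_letter f]
      tauto
    · intro f hf
      simp only [Finset.mem_filter, Finset.mem_univ, true_and] at hf ⊢
      by_contra hc
      exact hf (by simpa using (key f).mpr hc)
  have htot := Finset.card_filter_add_card_filter_not
    (s := (Finset.univ : Finset (ColFace L))) (p := fun f => upFace f)
  have hcard : (Finset.univ : Finset (ColFace L)).card = L * 4 := by
    simp [Fintype.card_prod]
  omega

lemma card_adj_le (f : ColFace L) (t : Finset (ColFace L)) :
    (t.filter (fun g => colAdj f g)).card ≤ 4 := by
  classical
  have hsub : t.filter (fun g => colAdj f g) ⊆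
      {(f.1, f.2 + 1), (f.1, f.2 - 1), (f.1 + 1, f.2), (f.1 - 1, f.2)} := by
    intro g hg
    have hadj : colAdj f g := (Finset.mem_filter.1 hg).2
    simp only [Finset.mem_insert, Finset.mem_singleton, Prod.ext_iff]
    rcases hadj with ⟨h1, h2 | h2⟩ | ⟨h1, h2 | h2⟩
    · exact Or.inl ⟨h1.symm, h2⟩
    · exact Or.inr (Or.inl ⟨h1.symm, eq_sub_iff_add_eq.2 h2.symm⟩)
    · exact Or.inr (Or.inr (Or.inl ⟨h2, h1.symm⟩))
    · exact Or.inr (Or.inr (Or.inr ⟨eq_sub_iff_add_eq.2 h2.symm, h1.symm⟩))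
  refine le_trans (Finset.card_le_card hsub) ?_
  refine le_trans (Finset.card_insert_le _ _) (Nat.succ_le_succ ?_)
  refine le_trans (Finset.card_insert_le _ _) (Nat.succ_le_succ ?_)
  refine le_trans (Finset.card_insert_le _ _) (Nat.succ_le_succ ?_)
  simp

end ColAux

/-- For a closed column of faces `aᵢ, bᵢ, cᵢ, dᵢ` (`i = 1,…,L₁` cyclic,
`L₁` even, `≥ 2`) with face operators `b_f† = ∑_e σ_f(e) b_e†` satisfying
`[b_f, b_f†] = 4`, `[b_f, b_g†] = -1` for adjacent faces and `0` otherwise, the two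
rotated states satisfy `⟨↑|↑⟩ = ⟨↓|↓⟩ = 4^(2L₁)` and `|⟨↑|↓⟩| < 4^(2L₁)`; consequently
the Gram matrix of `{|↑⟩, |↓⟩}` has positive determinant, and the two states are
linearly independent. -/
theorem column_rotation_lin_indep {E : Type*} [Fintype E] [DecidableEq E]
    (L : ℕ) [NeZero L] (hL : Even L) (hL2 : 2 ≤ L)
    (σ : ColFace L → E → ℤ)
    (hval : ∀ f e, σ f e = -1 ∨ σ f e = 0 ∨ σ f e = 1)
    (hsupp : ∀ f, ({e | σ f e ≠ 0} : Set E).ncard = 4)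
    (hcomm : ∀ f g : ColFace L, (∑ e : E, σ f e * σ g e) =
      if f = g then 4 else if colAdj f g then -1 else 0) :
    wInner (upState σ) (upState σ) = (4 : ℂ) ^ (2 * L) ∧
    wInner (downState σ) (downState σ) = (4 : ℂ) ^ (2 * L) ∧
    ‖wInner (upState σ) (downState σ)‖ < 4 ^ (2 * L) ∧
    0 < (4 : ℝ) ^ (2 * L) * (4 : ℝ) ^ (2 * L)
        - ‖wInner (upState σ) (downState σ)‖ ^ 2 ∧
    LinearIndependent ℂ ![upState σ, downState σ] := by
  classical
  haveI : Fact (1 < L) := ⟨by omega⟩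
  set U := Finset.univ.filter (fun f : ColFace L => upFace f) with hU
  set D := Finset.univ.filter (fun f : ColFace L => ¬ upFace f) with hD
  have hupU : ∀ f ∈ U, upFace f := fun f hf => (Finset.mem_filter.1 hf).2
  have hdownD : ∀ g ∈ D, ¬ upFace g := fun g hg => (Finset.mem_filter.1 hg).2
  have hcardU : U.card = 2 * L := ColAux.card_up
  have hcardD : D.card = 2 * L := by
    have htot := Finset.card_filter_add_card_filter_not
      (s := (Finset.univ : Finset (ColFace L))) (p := fun f => upFace f)
    have hcard : (Finset.univ : Finset (ColFace L)).card = L * 4 := by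
      simp [Fintype.card_prod]
    rw [← hU, ← hD] at htot
    omega
  have hupSt : upState σ = ∏ f ∈ U, facePoly σ f := rfl
  have hdownSt : downState σ = ∏ f ∈ D, facePoly σ f := rfl
  -- contraction values
  have hC : ∀ f g : ColFace L, ColAux.contr σ f g
      = ((if f = g then 4 else if colAdj f g then -1 else 0 : ℤ) : ℂ) := by
    intro f g
    rw [← hcomm f g]
    unfold ColAux.contr
    push_cast
    rfl
  have hCself : ∀ f : ColFace L, ColAux.contr σ f f = 4 := by
    intro f; rw [hC, if_pos rfl]; norm_num
  have habs : ∀ f g : ColFace L, f ≠ g →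
      ‖ColAux.contr σ f g‖ = if colAdj f g then 1 else 0 := by
    intro f g hne
    rw [hC, if_neg hne]
    split_ifs <;> simp
  have hU0 : ∀ f ∈ U, ∀ g ∈ U, f ≠ g → ColAux.contr σ f g = 0 := by
    intro f hf g hg hne
    rw [hC, if_neg hne, if_neg, Int.cast_zero]
    intro hadj
    exact ((ColAux.adj_flip hL hL2 hadj).mp (hupU f hf)) (hupU g hg)
  have hD0 : ∀ f ∈ D, ∀ g ∈ D, f ≠ g → ColAux.contr σ f g = 0 := by
    intro f hf g hg hne
    rw [hC, if_neg hne, if_neg, Int.cast_zero]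
    intro hadj
    exact hdownD f hf ((ColAux.adj_flip hL hL2 hadj).mpr (hdownD g hg))
  -- diagonal inner products
  have hupup : wInner (upState σ) (upState σ) = (4 : ℂ) ^ (2 * L) := by
    rw [hupSt, ColAux.wick_diag σ U (fun f _ => hCself f) hU0, hcardU]
  have hdndn : wInner (downState σ) (downState σ) = (4 : ℂ) ^ (2 * L) := by
    rw [hdownSt, ColAux.wick_diag σ D (fun f _ => hCself f) hD0, hcardD]
  -- row-sum bound
  have hrow : ∀ f : ColFace L, upFace f → ∀ t ⊆ D,
      ∑ g ∈ t, ‖ColAux.contr σ f g‖ ≤ 4 := by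
    intro f hf t ht
    have h1 : ∑ g ∈ t, ‖ColAux.contr σ f g‖
        ≤ ∑ g ∈ D, ‖ColAux.contr σ f g‖ :=
      Finset.sum_le_sum_of_subset_of_nonneg ht fun g _ _ => norm_nonneg _
    refine h1.trans ?_
    have h2 : ∀ g ∈ D, ‖ColAux.contr σ f g‖
        = if colAdj f g then (1 : ℝ) else 0 := by
      intro g hg
      exact habs f g (fun h => hdownD g hg (h ▸ hf))
    rw [Finset.sum_congr rfl h2, Finset.sum_boole]
    have h3 := ColAux.card_adj_le f D
    exact_mod_cast h3
  -- the special faces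
  have h1v : (1 : ZMod L).val = 1 := ZMod.val_one L
  have hodd1 : Odd ((1 : ZMod L)).val := by rw [h1v]; exact odd_one
  set a : ColFace L := (1, 0) with ha
  set a' : ColFace L := (1, 2) with ha'
  set j1 : ColFace L := (1, 1) with hj1
  set j2 : ColFace L := (1, 3) with hj2
  have hupa : upFace a := by
    rw [ColAux.up_iff]
    exact iff_of_true hodd1 (Or.inl rfl)
  have hupa' : upFace a' := by
    rw [ColAux.up_iff]
    exact iff_of_true hodd1 (Or.inr rfl)
  have hdnj1 : ¬ upFace j1 := by
    rw [ColAux.up_iff]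
    intro h
    exact absurd (h.mp hodd1) (by decide : ¬((1 : ZMod 4) = 0 ∨ (1 : ZMod 4) = 2))
  have hdnj2 : ¬ upFace j2 := by
    rw [ColAux.up_iff]
    intro h
    exact absurd (h.mp hodd1) (by decide : ¬((3 : ZMod 4) = 0 ∨ (3 : ZMod 4) = 2))
  have haU : a ∈ U := Finset.mem_filter.2 ⟨Finset.mem_univ _, hupa⟩
  have ha'U : a' ∈ U := Finset.mem_filter.2 ⟨Finset.mem_univ _, hupa'⟩
  have hj1D : j1 ∈ D := Finset.mem_filter.2 ⟨Finset.mem_univ _, hdnj1⟩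
  have hj2D : j2 ∈ D := Finset.mem_filter.2 ⟨Finset.mem_univ _, hdnj2⟩
  have hne_aa' : a ≠ a' := by
    intro h
    exact absurd (congrArg Prod.snd h) (by decide : ¬((0 : ZMod 4) = 2))
  have hne_j12 : j1 ≠ j2 := by
    intro h
    exact absurd (congrArg Prod.snd h) (by decide : ¬((1 : ZMod 4) = 3))
  have hne_aj1 : a ≠ j1 := by
    intro h; exact absurd (congrArg Prod.snd h) (by decide : ¬((0 : ZMod 4) = 1))
  have hne_aj2 : a ≠ j2 := by
    intro h; exact absurd (congrArg Prod.snd h) (by decide : ¬((0 : ZMod 4) = 3))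
  have hne_a'j1 : a' ≠ j1 := by
    intro h; exact absurd (congrArg Prod.snd h) (by decide : ¬((2 : ZMod 4) = 1))
  have hne_a'j2 : a' ≠ j2 := by
    intro h; exact absurd (congrArg Prod.snd h) (by decide : ¬((2 : ZMod 4) = 3))
  have hadj_aj1 : colAdj a j1 := by
    unfold colAdj; exact Or.inl ⟨rfl, Or.inl (by decide : (1 : ZMod 4) = 0 + 1)⟩
  have hadj_aj2 : colAdj a j2 := by
    unfold colAdj; exact Or.inl ⟨rfl, Or.inr (by decide : (0 : ZMod 4) = 3 + 1)⟩
  have hadj_a'j1 : colAdj a' j1 := by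
    unfold colAdj; exact Or.inl ⟨rfl, Or.inr (by decide : (2 : ZMod 4) = 1 + 1)⟩
  have hadj_a'j2 : colAdj a' j2 := by
    unfold colAdj; exact Or.inl ⟨rfl, Or.inl (by decide : (3 : ZMod 4) = 2 + 1)⟩
  have habs_aj1 : ‖ColAux.contr σ a j1‖ = 1 := by
    rw [habs a j1 hne_aj1, if_pos hadj_aj1]
  have habs_aj2 : ‖ColAux.contr σ a j2‖ = 1 := by
    rw [habs a j2 hne_aj2, if_pos hadj_aj2]
  have habs_a'j1 : ‖ColAux.contr σ a' j1‖ = 1 := by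
    rw [habs a' j1 hne_a'j1, if_pos hadj_a'j1]
  have habs_a'j2 : ‖ColAux.contr σ a' j2‖ = 1 := by
    rw [habs a' j2 hne_a'j2, if_pos hadj_a'j2]
  have ha'Ue : a' ∈ U.erase a := Finset.mem_erase.2 ⟨Ne.symm hne_aa', ha'U⟩
  have hcard2 : ((U.erase a).erase a').card = 2 * L - 2 := by
    rw [Finset.card_erase_of_mem ha'Ue, Finset.card_erase_of_mem haU, hcardU]
    omega
  -- strict bound
  set G := wInner (upState σ) (downState σ) with hG
  set B : ℝ := 4 ^ (2 * L - 2) with hB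
  have hBpos : (0 : ℝ) < B := by positivity
  set S' : ℝ := ∑ j ∈ D, ‖ColAux.contr σ a' j‖ with hS'
  have hS'le : S' ≤ 4 := hrow a' hupa' D (le_refl D)
  have hSa : ∑ j ∈ D, ‖ColAux.contr σ a j‖ ≤ 4 := hrow a hupa D (le_refl D)
  have hW2 : ∀ j ∈ D, ∀ j' ∈ D.erase j,
      ‖wInner (∏ f ∈ (U.erase a).erase a', facePoly σ f)
        (∏ g ∈ (D.erase j).erase j', facePoly σ g)‖ ≤ B := by
    intro j hj j' hj'
    have := ColAux.wick_bound σ ((U.erase a).erase a') ((D.erase j).erase j')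
      (fun f hf => hrow f
        (hupU f (Finset.mem_of_mem_erase (Finset.mem_of_mem_erase hf)))
        _ (le_trans (Finset.erase_subset _ _) (Finset.erase_subset _ _)))
    rwa [hcard2] at this
  have hW1 : ∀ j ∈ D,
      ‖wInner (∏ f ∈ U.erase a, facePoly σ f)
        (∏ g ∈ D.erase j, facePoly σ g)‖
      ≤ (S' - ‖ColAux.contr σ a' j‖) * B := by
    intro j hj
    rw [ColAux.wick_rec σ (U.erase a) (D.erase j) ha'Ue]
    calc ‖∑ j' ∈ D.erase j, ColAux.contr σ a' j' *
          wInner (∏ f ∈ (U.erase a).erase a', facePoly σ f)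
            (∏ g ∈ (D.erase j).erase j', facePoly σ g)‖
        ≤ ∑ j' ∈ D.erase j, ‖ColAux.contr σ a' j' *
          wInner (∏ f ∈ (U.erase a).erase a', facePoly σ f)
            (∏ g ∈ (D.erase j).erase j', facePoly σ g)‖ := norm_sum_le _ _
      _ ≤ ∑ j' ∈ D.erase j, ‖ColAux.contr σ a' j'‖ * B := by
          refine Finset.sum_le_sum fun j' hj' => ?_
          rw [norm_mul]
          exact mul_le_mul_of_nonneg_left (hW2 j hj j' hj') (norm_nonneg _)
      _ = (S' - ‖ColAux.contr σ a' j‖) * B := by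
          rw [← Finset.sum_mul, Finset.sum_erase_eq_sub hj, hS']
  have habsG : ‖G‖ < (4 : ℝ) ^ (2 * L) := by
    have hrec1 : G = ∑ j ∈ D, ColAux.contr σ a j *
        wInner (∏ f ∈ U.erase a, facePoly σ f) (∏ g ∈ D.erase j, facePoly σ g) := by
      rw [hG, hupSt, hdownSt]
      exact ColAux.wick_rec σ U D haU
    have hstep : ‖G‖ ≤
        (S' * (∑ j ∈ D, ‖ColAux.contr σ a j‖)
          - ∑ j ∈ D, ‖ColAux.contr σ a j‖
              * ‖ColAux.contr σ a' j‖) * B := by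
      rw [hrec1]
      calc ‖∑ j ∈ D, ColAux.contr σ a j *
            wInner (∏ f ∈ U.erase a, facePoly σ f) (∏ g ∈ D.erase j, facePoly σ g)‖
          ≤ ∑ j ∈ D, ‖ColAux.contr σ a j *
            wInner (∏ f ∈ U.erase a, facePoly σ f) (∏ g ∈ D.erase j, facePoly σ g)‖ :=
            norm_sum_le _ _
        _ ≤ ∑ j ∈ D, ‖ColAux.contr σ a j‖ *
              ((S' - ‖ColAux.contr σ a' j‖) * B) := by
            refine Finset.sum_le_sum fun j hj => ?_
            rw [norm_mul]
            exact mul_le_mul_of_nonneg_left (hW1 j hj) (norm_nonneg _)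
        _ = (S' * (∑ j ∈ D, ‖ColAux.contr σ a j‖)
              - ∑ j ∈ D, ‖ColAux.contr σ a j‖
                  * ‖ColAux.contr σ a' j‖) * B := by
            have hterm : ∀ j ∈ D, ‖ColAux.contr σ a j‖ *
                ((S' - ‖ColAux.contr σ a' j‖) * B)
                = S' * ‖ColAux.contr σ a j‖ * B
                  - ‖ColAux.contr σ a j‖
                    * ‖ColAux.contr σ a' j‖ * B := fun j _ => by ring
            rw [Finset.sum_congr rfl hterm, Finset.sum_sub_distrib, sub_mul]
            congr 1
            · rw [Finset.mul_sum, Finset.sum_mul]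
            · rw [Finset.sum_mul]
    have hlow : (2 : ℝ) ≤ ∑ j ∈ D, ‖ColAux.contr σ a j‖
        * ‖ColAux.contr σ a' j‖ := by
      have hsub : ({j1, j2} : Finset (ColFace L)) ⊆ D := by
        intro x hx
        rcases Finset.mem_insert.1 hx with rfl | hx
        · exact hj1D
        · rw [Finset.mem_singleton.1 hx]
          exact hj2D
      have := Finset.sum_le_sum_of_subset_of_nonneg hsub
        (f := fun j => ‖ColAux.contr σ a j‖ * ‖ColAux.contr σ a' j‖)
        (fun j _ _ => mul_nonneg (norm_nonneg _) (norm_nonneg _))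
      rw [Finset.sum_pair hne_j12, habs_aj1, habs_aj2, habs_a'j1, habs_a'j2] at this
      linarith
    have h14 : ‖G‖ ≤ 14 * B := by
      refine hstep.trans ?_
      refine mul_le_mul_of_nonneg_right ?_ (le_of_lt hBpos)
      have h16 : S' * (∑ j ∈ D, ‖ColAux.contr σ a j‖) ≤ 16 := by
        have hS'0 : (0 : ℝ) ≤ S' :=
          Finset.sum_nonneg fun j _ => norm_nonneg _
        nlinarith
      linarith
    have hfin : (14 : ℝ) * B < 4 ^ (2 * L) := by
      have h2L : 2 * L = 2 + (2 * L - 2) := by omega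
      rw [h2L, pow_add]
      have : (4 : ℝ) ^ 2 = 16 := by norm_num
      rw [this]
      exact mul_lt_mul_of_pos_right (by norm_num) hBpos
    exact lt_of_le_of_lt h14 hfin
  -- assemble
  refine ⟨hupup, hdndn, habsG, ?_, ?_⟩
  · nlinarith [norm_nonneg G, habsG]
  · rw [LinearIndependent.pair_iff]
    intro s t hst
    have e1 : s * (4 : ℂ) ^ (2 * L) + t * G = 0 := by
      have h0 : wInner (upState σ) (s • upState σ + t • downState σ) = 0 := by
        rw [hst, ColAux.wInner_zero_right]
      rwa [ColAux.wInner_add_right, ColAux.wInner_smul_right, ColAux.wInner_smul_right,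
        hupup, ← hG] at h0
    have e2 : s * (starRingEnd ℂ) G + t * (4 : ℂ) ^ (2 * L) = 0 := by
      have h0 : wInner (downState σ) (s • upState σ + t • downState σ) = 0 := by
        rw [hst, ColAux.wInner_zero_right]
      rwa [ColAux.wInner_add_right, ColAux.wInner_smul_right, ColAux.wInner_smul_right,
        hdndn, ColAux.wInner_conj (upState σ) (downState σ), ← hG] at h0
    have key : t * ((4 : ℂ) ^ (2 * L) * (4 : ℂ) ^ (2 * L) - (starRingEnd ℂ) G * G) = 0 := by
      linear_combination (4 : ℂ) ^ (2 * L) * e2 - (starRingEnd ℂ) G * e1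
    have hne2 : (4 : ℂ) ^ (2 * L) * (4 : ℂ) ^ (2 * L) - (starRingEnd ℂ) G * G ≠ 0 := by
      intro h
      rw [sub_eq_zero] at h
      have heq : ‖(4 : ℂ) ^ (2 * L) * (4 : ℂ) ^ (2 * L)‖
          = ‖(starRingEnd ℂ) G * G‖ := by rw [h]
      simp only [norm_mul, norm_pow, Complex.norm_conj, Complex.norm_ofNat] at heq
      nlinarith [norm_nonneg G, habsG]
    have ht : t = 0 := by
      rcases mul_eq_zero.1 key with h | h
      · exact h
      · exact absurd h hne2
    have hs : s = 0 := by
      rw [ht, zero_mul, add_zero] at e1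
      have h4 : ((4 : ℂ) ^ (2 * L)) ≠ 0 := pow_ne_zero _ (by norm_num)
      exact (mul_eq_zero.1 e1).resolve_right h4
    exact ⟨hs, ht⟩
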